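/- (Relationship between DGB and RPB) Fix γ ∈ (0,1], a finite index set T, symmetric matrices H_t ∈ ℝ^{d×d} (t ∈ T), and λ₀, λ₁ > 0. Let α* ∈ [0,1]^T and Γ* ⪰ O be dual feasible, set M₀* := M_{λ₀}(α*, Γ*), and suppose strong duality holds at λ₀: P_{λ₀}(M₀*) = D_{λ₀}(α*, Γ*). Define the RPB radius r_RPB := (|λ₀−λ₁|/(2λ₁))‖M₀*‖_F and center Q_RPB := ((λ₀+λ₁)/(2λ₁))M₀*, and the DGB radius r_DGB := √(2(P_{λ₁}(M₀*) − D_{λ₁}(α*, Γ*))/λ₁) with center M₀*. Then r_DGB = 2·r_RPB, ‖M₀* − Q_RPB‖_F = r_RPB, and the closed Frobenius ball {X : ‖X − Q_RPB‖_F ≤ r_RPB} is contained in the closed Frobenius ball {X : ‖X − M₀*‖_F ≤ r_DGB}. -/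

import Mathlib

open scoped BigOperators
open scoped Matrix

/-- Frobenius inner product ⟨A,B⟩ = tr(Aᵀ B). -/
noncomputable def frob {d : ℕ} (A B : Matrix (Fin d) (Fin d) ℝ) : ℝ :=
  Matrix.trace (Aᵀ * B)

/-- Frobenius norm ‖A‖_F = √⟨A,A⟩. -/
noncomputable def frobNorm {d : ℕ} (A : Matrix (Fin d) (Fin d) ℝ) : ℝ :=
  Real.sqrt (frob A A)

/-- Smoothed hinge loss ℓ_γ. -/
noncomputable def shinge (γ x : ℝ) : ℝ :=
  if 1 < x then 0 else if 1 - γ ≤ x then (1 - x) ^ 2 / (2 * γ) else 1 - x - γ / 2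

/-- Derivative of the smoothed hinge loss ℓ_γ'. -/
noncomputable def shinge' (γ x : ℝ) : ℝ :=
  if 1 < x then 0 else if 1 - γ ≤ x then -(1 - x) / γ else -1

/-- Primal objective P_λ(M) = Σ_t ℓ_γ(⟨M,H_t⟩) + (λ/2)‖M‖_F². -/
noncomputable def Pobj {d : ℕ} {ι : Type*} (γ lam : ℝ) (T : Finset ι)
    (H : ι → Matrix (Fin d) (Fin d) ℝ) (M : Matrix (Fin d) (Fin d) ℝ) : ℝ :=
  (∑ t ∈ T, shinge γ (frob M (H t))) + lam / 2 * frobNorm M ^ 2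

/-- Gradient ∇P_λ(M) = Σ_t ℓ_γ'(⟨M,H_t⟩) H_t + λ M. -/
noncomputable def gradP {d : ℕ} {ι : Type*} (γ lam : ℝ) (T : Finset ι)
    (H : ι → Matrix (Fin d) (Fin d) ℝ) (M : Matrix (Fin d) (Fin d) ℝ) :
    Matrix (Fin d) (Fin d) ℝ :=
  (∑ t ∈ T, shinge' γ (frob M (H t)) • H t) + lam • M

/-- M_λ(α,Γ) = (1/λ)(Σ_t α_t H_t + Γ). -/
noncomputable def Mlam {d : ℕ} {ι : Type*} (lam : ℝ) (T : Finset ι)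
    (H : ι → Matrix (Fin d) (Fin d) ℝ) (α : ι → ℝ) (Γ : Matrix (Fin d) (Fin d) ℝ) :
    Matrix (Fin d) (Fin d) ℝ :=
  (1 / lam) • ((∑ t ∈ T, α t • H t) + Γ)

/-- Dual objective D_λ(α,Γ) = −(γ/2)‖α‖₂² + Σ_t α_t − (λ/2)‖M_λ(α,Γ)‖_F². -/
noncomputable def Dobj {d : ℕ} {ι : Type*} (γ lam : ℝ) (T : Finset ι)
    (H : ι → Matrix (Fin d) (Fin d) ℝ) (α : ι → ℝ) (Γ : Matrix (Fin d) (Fin d) ℝ) : ℝ :=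
  -(γ / 2) * (∑ t ∈ T, α t ^ 2) + (∑ t ∈ T, α t) -
    lam / 2 * frobNorm (Mlam lam T H α Γ) ^ 2


noncomputable def embedF {d : ℕ} (A : Matrix (Fin d) (Fin d) ℝ) :
    EuclideanSpace ℝ (Fin d × Fin d) :=
  (WithLp.equiv 2 _).symm fun p => A p.1 p.2

lemma frobNorm_eq_norm {d : ℕ} (A : Matrix (Fin d) (Fin d) ℝ) :
    frobNorm A = ‖embedF A‖ := by
  rw [frobNorm, EuclideanSpace.norm_eq]
  have : frob A A = ∑ p : Fin d × Fin d, ‖embedF A p‖ ^ 2 := by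
    simp only [frob, Matrix.trace, Matrix.mul_apply, Matrix.diag,
      Matrix.transpose_apply, embedF, WithLp.equiv_symm_apply, PiLp.toLp_apply,
      Fintype.sum_prod_type, Real.norm_eq_abs, sq_abs]
    rw [Finset.sum_comm]
    simp [sq]
  rw [this]

lemma embedF_sub {d : ℕ} (A B : Matrix (Fin d) (Fin d) ℝ) :
    embedF (A - B) = embedF A - embedF B := rfl

lemma frobNorm_triangle {d : ℕ} (A B C : Matrix (Fin d) (Fin d) ℝ) :
    frobNorm (A - C) ≤ frobNorm (A - B) + frobNorm (B - C) := by
  rw [frobNorm_eq_norm, frobNorm_eq_norm, frobNorm_eq_norm, embedF_sub, embedF_sub, embedF_sub]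
  exact norm_sub_le_norm_sub_add_norm_sub _ _ _

lemma frobNorm_smul {d : ℕ} (c : ℝ) (A : Matrix (Fin d) (Fin d) ℝ) :
    frobNorm (c • A) = |c| * frobNorm A := by
  have : frob (c • A) (c • A) = c ^ 2 * frob A A := by
    rw [frob, Matrix.transpose_smul, Matrix.smul_mul, Matrix.mul_smul, smul_smul,
      Matrix.trace_smul, smul_eq_mul, frob, sq]
  rw [frobNorm, this, frobNorm, Real.sqrt_mul (sq_nonneg c), Real.sqrt_sq_eq_abs]

lemma frobNorm_nonneg {d : ℕ} (A : Matrix (Fin d) (Fin d) ℝ) : 0 ≤ frobNorm A :=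
  Real.sqrt_nonneg _

lemma frobNorm_sub_comm {d : ℕ} (A B : Matrix (Fin d) (Fin d) ℝ) :
    frobNorm (A - B) = frobNorm (B - A) := by
  rw [show A - B = (-1 : ℝ) • (B - A) by simp, frobNorm_smul]
  simp

/-- Relationship between DGB and RPB. -/
theorem dgb_vs_rpb {d : ℕ} {ι : Type*} (γ lam0 lam1 : ℝ)
    (hγ : 0 < γ) (hγ1 : γ ≤ 1) (hlam0 : 0 < lam0) (hlam1 : 0 < lam1)
    (T : Finset ι) (H : ι → Matrix (Fin d) (Fin d) ℝ)
    (hH : ∀ t ∈ T, (H t).IsSymm)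
    (αstar : ι → ℝ) (Γstar : Matrix (Fin d) (Fin d) ℝ)
    (hα : ∀ t ∈ T, 0 ≤ αstar t ∧ αstar t ≤ 1) (hΓ : Γstar.PosSemidef)
    (hsd : Pobj γ lam0 T H (Mlam lam0 T H αstar Γstar) = Dobj γ lam0 T H αstar Γstar) :
    let M0star := Mlam lam0 T H αstar Γstar
    let rRPB := |lam0 - lam1| / (2 * lam1) * frobNorm M0star
    let Qrpb := ((lam0 + lam1) / (2 * lam1)) • M0star
    let rDGB := Real.sqrt (2 * (Pobj γ lam1 T H M0star - Dobj γ lam1 T H αstar Γstar) / lam1)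
    rDGB = 2 * rRPB ∧
    frobNorm (M0star - Qrpb) = rRPB ∧
    {X : Matrix (Fin d) (Fin d) ℝ | frobNorm (X - Qrpb) ≤ rRPB} ⊆
      {X : Matrix (Fin d) (Fin d) ℝ | frobNorm (X - M0star) ≤ rDGB} := by
  have hl1 : lam1 ≠ 0 := ne_of_gt hlam1
  have hl0 : lam0 ≠ 0 := ne_of_gt hlam0
  set M0 := Mlam lam0 T H αstar Γstar with hM0def
  have hn0 : 0 ≤ frobNorm M0 := frobNorm_nonneg _
  have hM1 : Mlam lam1 T H αstar Γstar = (lam0 / lam1) • M0 := by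
    rw [hM0def, Mlam, Mlam, smul_smul]
    congr 1
    field_simp
  have hnorm1 : frobNorm (Mlam lam1 T H αstar Γstar) ^ 2
      = (lam0 / lam1) ^ 2 * frobNorm M0 ^ 2 := by
    rw [hM1, frobNorm_smul, mul_pow, sq_abs]
  have hS : (∑ t ∈ T, shinge γ (frob M0 (H t)))
      = -(γ / 2) * (∑ t ∈ T, αstar t ^ 2) + (∑ t ∈ T, αstar t)
        - lam0 * frobNorm M0 ^ 2 := by
    simp only [Pobj, Dobj] at hsd
    rw [← hM0def] at hsd
    linarith
  have hgap : Pobj γ lam1 T H M0 - Dobj γ lam1 T H αstar Γstar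
      = (lam1 - lam0) ^ 2 / (2 * lam1) * frobNorm M0 ^ 2 := by
    simp only [Pobj, Dobj]
    rw [hnorm1, hS]
    field_simp
    ring
  have key1 : Real.sqrt (2 * (Pobj γ lam1 T H M0 - Dobj γ lam1 T H αstar Γstar) / lam1)
      = 2 * (|lam0 - lam1| / (2 * lam1) * frobNorm M0) := by
    rw [hgap]
    have h1 : 2 * ((lam1 - lam0) ^ 2 / (2 * lam1) * frobNorm M0 ^ 2) / lam1
        = (|lam0 - lam1| / lam1 * frobNorm M0) ^ 2 := by
      rw [mul_pow, div_pow, sq_abs]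
      field_simp
      ring
    rw [h1, Real.sqrt_sq (mul_nonneg (by positivity) hn0)]
    field_simp
  have key2 : frobNorm (M0 - ((lam0 + lam1) / (2 * lam1)) • M0)
      = |lam0 - lam1| / (2 * lam1) * frobNorm M0 := by
    have h2 : M0 - ((lam0 + lam1) / (2 * lam1)) • M0
        = ((lam1 - lam0) / (2 * lam1)) • M0 := by
      nth_rewrite 1 [← one_smul ℝ M0]
      rw [← sub_smul]
      congr 1
      field_simp
      ring
    rw [h2, frobNorm_smul, abs_div, abs_sub_comm,
      abs_of_pos (by positivity : (0:ℝ) < 2 * lam1)]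
  refine ⟨key1, key2, ?_⟩
  intro X hX
  simp only [Set.mem_setOf_eq] at hX ⊢
  calc frobNorm (X - M0)
      ≤ frobNorm (X - ((lam0 + lam1) / (2 * lam1)) • M0)
        + frobNorm (((lam0 + lam1) / (2 * lam1)) • M0 - M0) := frobNorm_triangle _ _ _
    _ ≤ |lam0 - lam1| / (2 * lam1) * frobNorm M0
        + |lam0 - lam1| / (2 * lam1) * frobNorm M0 := by
        have := (frobNorm_sub_comm (((lam0 + lam1) / (2 * lam1)) • M0) M0).trans key2
        linarith [hX]
    _ = Real.sqrt (2 * (Pobj γ lam1 T H M0 - Dobj γ lam1 T H αstar Γstar) / lam1) := by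
        rw [key1]; ring
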